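/- Fix an integer m ≥ 1. Let w_m^x(z) = Σ_{i=1}^m α_{x,i} z^{i-1}, where α_x ∈ ℝ^m solves H_m α_x = (1, x, …, x^{m-1})ᵀ for the m×m Hilbert matrix H_m = (1/(i+j-1))_{i,j=1}^m. Then at the boundary points the squared L²([0,1])-norm equals m² exactly: ∫_0^1 w_m^1(z)² dz = m² and ∫_0^1 w_m^0(z)² dz = m². Equivalently, the sum of all entries of H_m^{-1} equals m², and the (1,1) entry of H_m^{-1} equals m². -/

import Mathlib

open MeasureTheory

/-- The `m × m` Hilbert matrix `H_m = (1/(i+j-1))_{i,j=1}^m` (0-indexed here). -/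
noncomputable def hilbertMatrix (m : ℕ) : Matrix (Fin m) (Fin m) ℝ :=
  fun i j => 1 / ((i.1 : ℝ) + (j.1 : ℝ) + 1)
open Polynomial


/-- Integral of a polynomial over `[0,1]`. -/
noncomputable def PI (p : ℝ[X]) : ℝ := ∫ z in (0:ℝ)..1, p.eval z

lemma PI_intable (p : ℝ[X]) : IntervalIntegrable (fun z => p.eval z) volume 0 1 :=
  p.continuous.intervalIntegrable _ _

lemma PI_add (p q : ℝ[X]) : PI (p + q) = PI p + PI q := by
  unfold PI
  simp only [eval_add]
  exact intervalIntegral.integral_add (PI_intable p) (PI_intable q)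

lemma PI_C_mul (a : ℝ) (p : ℝ[X]) : PI (C a * p) = a * PI p := by
  unfold PI
  simp only [eval_mul, eval_C]
  exact intervalIntegral.integral_const_mul a _

lemma PI_sum {ι : Type*} (s : Finset ι) (f : ι → ℝ[X]) :
    PI (∑ i ∈ s, f i) = ∑ i ∈ s, PI (f i) := by
  unfold PI
  simp only [eval_finset_sum]
  exact intervalIntegral.integral_finset_sum (fun i _ => PI_intable (f i))

lemma PI_derivative (p : ℝ[X]) : PI (derivative p) = p.eval 1 - p.eval 0 := by
  unfold PI
  exact intervalIntegral.integral_deriv_eq_sub'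
    (fun x => p.eval x)
    (funext fun x => (p.hasDerivAt x).deriv)
    (fun x _ => p.differentiableAt)
    ((derivative p).continuous.continuousOn)

lemma PI_X_pow (k : ℕ) : PI (X ^ k) = 1 / ((k : ℝ) + 1) := by
  unfold PI
  simp only [eval_pow, eval_X]
  rw [integral_pow]
  norm_num

lemma PI_comp_sub (p : ℝ[X]) : PI (p.comp (C 1 - X)) = PI p := by
  unfold PI
  simp only [eval_comp, eval_sub, eval_C, eval_X]
  rw [intervalIntegral.integral_comp_sub_left (fun z => p.eval z) 1]
  norm_num
noncomputable def gp (n : ℕ) : ℝ[X] := (X * (X - 1)) ^ n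

lemma gp_iter (n : ℕ) : ∀ k, k ≤ n →
    ∃ h : ℝ[X], derivative^[k] (gp n) = (X * (X - 1)) ^ (n - k) * h := by
  intro k
  induction k with
  | zero => intro _; exact ⟨1, by simp [gp]⟩
  | succ k ih =>
    intro hk
    obtain ⟨h, hh⟩ := ih (Nat.le_of_succ_le hk)
    have hb : n - k = (n - (k + 1)) + 1 := by omega
    refine ⟨C (((n - (k + 1)) + 1 : ℕ) : ℝ) * derivative (X * (X - 1)) * h
        + (X * (X - 1)) * derivative h, ?_⟩
    rw [Function.iterate_succ_apply', hh, hb, derivative_mul, derivative_pow]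
    simp only [Nat.add_sub_cancel]
    ring

lemma gp_eval0 (n k : ℕ) (h : k < n) : (derivative^[k] (gp n)).eval 0 = 0 := by
  obtain ⟨q, hq⟩ := gp_iter n k h.le
  have : n - k ≠ 0 := by omega
  simp [hq, zero_pow this]

lemma gp_eval1 (n k : ℕ) (h : k < n) : (derivative^[k] (gp n)).eval 1 = 0 := by
  obtain ⟨q, hq⟩ := gp_iter n k h.le
  have : n - k ≠ 0 := by omega
  simp [hq, zero_pow this]

lemma eval0_iter (p : ℝ[X]) (k : ℕ) :
    (derivative^[k] p).eval 0 = (k.factorial : ℝ) * p.coeff k := by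
  rw [← coeff_zero_eq_eval_zero, coeff_iterate_derivative]
  simp [Nat.descFactorial_self, nsmul_eq_mul]

lemma iter_comp (p : ℝ[X]) (k : ℕ) :
    derivative^[k] (p.comp (X + C 1)) = (derivative^[k] p).comp (X + C 1) := by
  induction k with
  | zero => rfl
  | succ k ih =>
    rw [Function.iterate_succ_apply', ih, Function.iterate_succ_apply', derivative_comp]
    simp

lemma eval1_iter (p : ℝ[X]) (k : ℕ) :
    (derivative^[k] p).eval 1 = (k.factorial : ℝ) * (p.comp (X + C 1)).coeff k := by
  have h : (derivative^[k] p).eval 1 = ((derivative^[k] p).comp (X + C 1)).eval 0 := by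
    simp [eval_comp]
  rw [h, ← iter_comp, eval0_iter]

lemma gp_comp (n : ℕ) : (gp n).comp (X + C 1) = X ^ n * (X + C 1) ^ n := by
  rw [gp, pow_comp, mul_comp, sub_comp, X_comp, one_comp]
  rw [show (X + C 1 - 1 : ℝ[X]) = X by simp, mul_comm, mul_pow]

lemma gp_eval1_self (n : ℕ) : (derivative^[n] (gp n)).eval 1 = (n.factorial : ℝ) := by
  rw [eval1_iter, gp_comp]
  have h := coeff_X_pow_mul (((X : ℝ[X]) + C 1) ^ n) n 0
  rw [zero_add] at h
  rw [h]
  simp [C_1, coeff_X_add_one_pow]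

lemma gp_eval0_self (n : ℕ) : (derivative^[n] (gp n)).eval 0 = (-1) ^ n * (n.factorial : ℝ) := by
  rw [eval0_iter, gp, mul_pow]
  have h := coeff_X_pow_mul (((X : ℝ[X]) - 1) ^ n) n 0
  rw [zero_add] at h
  rw [h, coeff_zero_eq_eval_zero]
  simp [mul_comm]

lemma gp_eval1_succ (n : ℕ) :
    (derivative^[n + 1] (gp n)).eval 1 = ((n + 1).factorial : ℝ) * n := by
  rw [eval1_iter, gp_comp]
  have h := coeff_X_pow_mul (((X : ℝ[X]) + C 1) ^ n) n 1
  rw [add_comm 1 n] at h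
  rw [h]
  simp [C_1, coeff_X_add_one_pow]
lemma PI_orth : ∀ j n r : ℕ, j < r → r ≤ n → PI (X ^ j * derivative^[r] (gp n)) = 0 := by
  intro j
  induction j with
  | zero =>
    intro n r hjr hrn
    obtain ⟨r', rfl⟩ : ∃ r', r = r' + 1 := ⟨r - 1, by omega⟩
    rw [pow_zero, one_mul, Function.iterate_succ_apply', PI_derivative,
      gp_eval1 n r' (by omega), gp_eval0 n r' (by omega), sub_zero]
  | succ j ih =>
    intro n r hjr hrn
    obtain ⟨r', rfl⟩ : ∃ r', r = r' + 1 := ⟨r - 1, by omega⟩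
    set q := derivative^[r'] (gp n) with hq
    have key := PI_derivative (X ^ (j + 1) * q)
    rw [derivative_mul, PI_add, derivative_X_pow] at key
    have h1 : PI (C ((j+1 : ℕ) : ℝ) * X ^ (j + 1 - 1) * q) = 0 := by
      rw [mul_assoc, PI_C_mul, Nat.add_sub_cancel, ih n r' (by omega) (by omega), mul_zero]
    have h2 : (X ^ (j + 1) * q).eval 1 = 0 := by
      rw [eval_mul, hq, gp_eval1 n r' (by omega), mul_zero]
    have h3 : (X ^ (j + 1) * q).eval 0 = 0 := by
      rw [eval_mul, hq, gp_eval0 n r' (by omega), mul_zero]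
    rw [h1, h2, h3, zero_add, sub_zero] at key
    rw [Function.iterate_succ_apply', ← hq]
    exact key

lemma PI_moment_master (r i : ℕ) (hi : i ≤ r) :
    PI (X ^ i * derivative^[r + 1] (gp r)) =
      (r.factorial : ℝ) - (if i = 0 then (-1 : ℝ) ^ r * (r.factorial : ℝ) else 0) := by
  cases i with
  | zero =>
    rw [pow_zero, one_mul, Function.iterate_succ_apply', PI_derivative,
      gp_eval1_self, gp_eval0_self]
    simp
  | succ j =>
    set q := derivative^[r] (gp r) with hq
    have key := PI_derivative (X ^ (j + 1) * q)
    rw [derivative_mul, PI_add, derivative_X_pow] at key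
    have h1 : PI (C ((j+1 : ℕ) : ℝ) * X ^ (j + 1 - 1) * q) = 0 := by
      rw [mul_assoc, PI_C_mul, Nat.add_sub_cancel, PI_orth j r r (by omega) le_rfl, mul_zero]
    have h2 : (X ^ (j + 1) * q).eval 1 = (r.factorial : ℝ) := by
      rw [eval_mul, hq, gp_eval1_self]
      simp
    have h3 : (X ^ (j + 1) * q).eval 0 = 0 := by
      rw [eval_mul, eval_pow, eval_X, zero_pow (by omega : j + 1 ≠ 0), zero_mul]
    rw [h1, h2, h3, zero_add, sub_zero] at key
    rw [Function.iterate_succ_apply', ← hq, key]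
    simp
noncomputable def w1p (n : ℕ) : ℝ[X] :=
  C (1 / (2 * (((n + 1).factorial : ℝ)))) * derivative^[(n + 1) + 1] (gp (n + 1))
    + C (1 / (2 * ((n.factorial : ℝ)))) * derivative^[n + 1] (gp n)

lemma w1p_moment (n i : ℕ) (hi : i ≤ n) : PI (X ^ i * w1p n) = 1 := by
  have hf1 : (((n + 1).factorial : ℝ)) ≠ 0 := Nat.cast_ne_zero.mpr (Nat.factorial_ne_zero _)
  have hf0 : ((n.factorial : ℝ)) ≠ 0 := Nat.cast_ne_zero.mpr (Nat.factorial_ne_zero _)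
  rw [w1p, mul_add, mul_left_comm (X ^ i), mul_left_comm (X ^ i), PI_add, PI_C_mul, PI_C_mul,
    PI_moment_master (n + 1) i (by omega), PI_moment_master n i (by omega)]
  by_cases hi0 : i = 0
  · simp only [hi0, if_pos rfl]
    rw [Nat.factorial_succ, pow_succ]
    push_cast
    field_simp
    ring
  · simp only [if_neg hi0, sub_zero]
    field_simp
    ring

lemma w1p_eval_one (n : ℕ) : (w1p n).eval 1 = ((n : ℝ) + 1) ^ 2 := by
  have hf1 : (((n + 1).factorial : ℝ)) ≠ 0 := Nat.cast_ne_zero.mpr (Nat.factorial_ne_zero _)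
  have hf0 : ((n.factorial : ℝ)) ≠ 0 := Nat.cast_ne_zero.mpr (Nat.factorial_ne_zero _)
  rw [w1p]
  simp only [eval_add, eval_mul, eval_C]
  rw [gp_eval1_succ (n + 1), gp_eval1_succ n]
  rw [Nat.factorial_succ (n + 1), Nat.factorial_succ n]
  push_cast
  field_simp
  ring

lemma gp_natDegree (m : ℕ) : (gp m).natDegree ≤ 2 * m := by
  have h2 : (X * (X - 1) : ℝ[X]).natDegree ≤ 2 := by
    refine le_trans (natDegree_mul_le) ?_
    have : ((X : ℝ[X]) - 1) = X - C 1 := by rw [C_1]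
    rw [this, natDegree_X_sub_C, natDegree_X]
  calc (gp m).natDegree ≤ m * (X * (X - 1) : ℝ[X]).natDegree := natDegree_pow_le
    _ ≤ m * 2 := Nat.mul_le_mul_left _ h2
    _ = 2 * m := Nat.mul_comm _ _

lemma w1p_natDegree (n : ℕ) : (w1p n).natDegree ≤ n := by
  have h1 : (derivative^[(n + 1) + 1] (gp (n + 1))).natDegree ≤ n := by
    refine le_trans (natDegree_iterate_derivative _ _) ?_
    have := gp_natDegree (n + 1)
    omega
  have h0 : (derivative^[n + 1] (gp n)).natDegree ≤ n := by
    refine le_trans (natDegree_iterate_derivative _ _) ?_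
    have := gp_natDegree n
    omega
  refine le_trans (natDegree_add_le _ _) ?_
  exact max_le (le_trans (natDegree_C_mul_le _ _) h1) (le_trans (natDegree_C_mul_le _ _) h0)

noncomputable def w0p (n : ℕ) : ℝ[X] := (w1p n).comp (C 1 - X)

lemma w0p_natDegree (n : ℕ) : (w0p n).natDegree ≤ n := by
  refine le_trans (natDegree_comp_le) ?_
  have h : (C 1 - X : ℝ[X]).natDegree ≤ 1 := by
    have : ((C 1 - X) : ℝ[X]) = -(X - C 1) := by ring
    rw [this, natDegree_neg, natDegree_X_sub_C]
  calc (w1p n).natDegree * (C 1 - X : ℝ[X]).natDegree ≤ n * 1 :=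
        Nat.mul_le_mul (w1p_natDegree n) h
    _ = n := Nat.mul_one n

lemma w0p_coeff_zero (n : ℕ) : (w0p n).coeff 0 = ((n : ℝ) + 1) ^ 2 := by
  rw [coeff_zero_eq_eval_zero, w0p, eval_comp]
  simp [w1p_eval_one]

lemma PI_lincomb (s : Finset ℕ) (c : ℕ → ℝ) (p : ℝ[X]) :
    PI ((∑ k ∈ s, C (c k) * X ^ k) * p) = ∑ k ∈ s, c k * PI (X ^ k * p) := by
  rw [Finset.sum_mul, PI_sum]
  exact Finset.sum_congr rfl fun k _ => by rw [mul_assoc, PI_C_mul]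

lemma w0p_moment (n i : ℕ) (hi : i ≤ n) :
    PI (X ^ i * w0p n) = if i = 0 then 1 else 0 := by
  have hXi : (X : ℝ[X]) ^ i * w0p n = (((C 1 - X) ^ i) * w1p n).comp (C 1 - X) := by
    rw [mul_comp, pow_comp, sub_comp, C_comp, X_comp]
    have : ((C 1 - (C 1 - X)) : ℝ[X]) = X := by ring
    rw [this, w0p]
  rw [hXi, PI_comp_sub]
  have hexp : ((C 1 - X : ℝ[X])) ^ i
      = ∑ k ∈ Finset.range (i + 1), C ((-1 : ℝ) ^ k * (i.choose k : ℝ)) * X ^ k := by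
    have h := add_pow (-X : ℝ[X]) (C 1) i
    rw [show (C 1 - X : ℝ[X]) = -X + C 1 by ring, h]
    refine Finset.sum_congr rfl fun k _ => ?_
    rw [neg_pow]
    simp only [C_1, one_pow, mul_one, C_mul]
    rw [C_eq_natCast, show (C ((-1 : ℝ) ^ k) : ℝ[X]) = (-1) ^ k by rw [map_pow, map_neg, C_1]]
    ring
  rw [hexp, PI_lincomb]
  have hsum : ∀ k ∈ Finset.range (i + 1), (-1 : ℝ) ^ k * (i.choose k : ℝ) * PI (X ^ k * w1p n)
      = (-1 : ℝ) ^ k * (i.choose k : ℝ) := by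
    intro k hk
    rw [w1p_moment n k (by simp at hk; omega), mul_one]
  rw [Finset.sum_congr rfl hsum]
  have h2 := add_pow (-1 : ℝ) 1 i
  simp only [neg_add_cancel, one_pow, mul_one] at h2
  rw [← h2, zero_pow_eq]
lemma PI_moment_sum (m : ℕ) (p : ℝ[X]) (hp : p.natDegree < m) (i : ℕ) :
    PI (X ^ i * p) = ∑ k : Fin m, p.coeff k / ((i : ℝ) + (k : ℕ) + 1) := by
  unfold PI
  have hfun : ∀ z : ℝ, (X ^ i * p).eval z
      = ∑ k ∈ Finset.range m, p.coeff k * z ^ (i + k) := by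
    intro z
    rw [eval_mul, eval_pow, eval_X, eval_eq_sum_range' hp, Finset.mul_sum]
    refine Finset.sum_congr rfl fun k _ => by rw [pow_add]; ring
  simp only [hfun]
  rw [intervalIntegral.integral_finset_sum
    (fun k _ => by exact (continuous_const.mul (continuous_pow _)).intervalIntegrable _ _)]
  rw [← Fin.sum_univ_eq_sum_range (fun k => ∫ z in (0:ℝ)..1, p.coeff k * z ^ (i + k)) m]
  refine Finset.sum_congr rfl fun k _ => ?_
  rw [intervalIntegral.integral_const_mul, integral_pow]
  push_cast
  norm_num
  ring

lemma mulVec_coeff (m : ℕ) (p : ℝ[X]) (hp : p.natDegree < m) (i : Fin m) :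
    (hilbertMatrix m).mulVec (fun k : Fin m => p.coeff k) i = PI (X ^ (i : ℕ) * p) := by
  rw [PI_moment_sum m p hp i]
  simp only [Matrix.mulVec, dotProduct, hilbertMatrix]
  exact Finset.sum_congr rfl fun k _ => by rw [mul_comm, mul_one_div]

lemma coeff_poly_of_vec (m : ℕ) (v : Fin m → ℝ) (i : Fin m) :
    (∑ j : Fin m, C (v j) * X ^ (j : ℕ)).coeff i = v i := by
  rw [finset_sum_coeff, Finset.sum_eq_single i]
  · simp [coeff_C_mul, coeff_X_pow]
  · intro j _ hj
    have hne : (i : ℕ) ≠ (j : ℕ) := fun h => hj (Fin.ext h.symm)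
    simp [coeff_C_mul, coeff_X_pow, hne]
  · simp

lemma integral_sq_eq (m : ℕ) (α : Fin m → ℝ) :
    (∫ z in Set.Icc (0:ℝ) 1, (∑ i : Fin m, α i * z ^ (i : ℕ)) ^ 2)
      = ∑ i : Fin m, α i * ((hilbertMatrix m).mulVec α i) := by
  have h1 : (∫ z in Set.Icc (0:ℝ) 1, (∑ i : Fin m, α i * z ^ (i : ℕ)) ^ 2)
      = ∫ z in (0:ℝ)..1, (∑ i : Fin m, α i * z ^ (i : ℕ)) ^ 2 := by
    rw [integral_Icc_eq_integral_Ioc, ← intervalIntegral.integral_of_le zero_le_one]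
  have h2 : ∀ z : ℝ, (∑ i : Fin m, α i * z ^ (i : ℕ)) ^ 2
      = ∑ i : Fin m, ∑ j : Fin m, (α i * α j) * z ^ ((i : ℕ) + (j : ℕ)) := by
    intro z
    rw [sq, Finset.sum_mul_sum]
    exact Finset.sum_congr rfl fun i _ => Finset.sum_congr rfl fun j _ => by
      rw [pow_add]; ring
  rw [h1]
  simp only [h2]
  rw [intervalIntegral.integral_finset_sum (fun i _ => by
    exact (continuous_finset_sum _ fun j _ =>
      continuous_const.mul (continuous_pow _)).intervalIntegrable _ _)]
  refine Finset.sum_congr rfl fun i _ => ?_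
  rw [intervalIntegral.integral_finset_sum (fun j _ => by exact
    (continuous_const.mul (continuous_pow _)).intervalIntegrable _ _)]
  simp only [Matrix.mulVec, dotProduct, hilbertMatrix, Finset.mul_sum]
  refine Finset.sum_congr rfl fun j _ => ?_
  rw [intervalIntegral.integral_const_mul, integral_pow]
  push_cast
  norm_num
  ring

lemma dot_swap (m : ℕ) (a b : Fin m → ℝ) :
    ∑ i : Fin m, a i * (hilbertMatrix m).mulVec b i
      = ∑ i : Fin m, b i * (hilbertMatrix m).mulVec a i := by
  simp only [Matrix.mulVec, dotProduct, Finset.mul_sum, hilbertMatrix]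
  rw [Finset.sum_comm]
  exact Finset.sum_congr rfl fun i _ => Finset.sum_congr rfl fun j _ => by ring

lemma sum_mul_zero_pow (m : ℕ) (hm : 1 ≤ m) (u : Fin m → ℝ) :
    ∑ i : Fin m, u i * (0:ℝ) ^ (i : ℕ) = u ⟨0, hm⟩ := by
  rw [Finset.sum_eq_single (⟨0, hm⟩ : Fin m)]
  · simp
  · intro j _ hj
    have hne : (j : ℕ) ≠ 0 := fun h => hj (Fin.ext h)
    rw [zero_pow hne, mul_zero]
  · simp

lemma hilbert_det_ne_zero (m : ℕ) : (hilbertMatrix m).det ≠ 0 := by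
  intro hdet
  obtain ⟨v, hv0, hv⟩ := (Matrix.exists_mulVec_eq_zero_iff).mpr hdet
  set q : ℝ[X] := ∑ j : Fin m, C (v j) * X ^ (j : ℕ) with hq
  set f : ℝ → ℝ := fun z => (∑ i : Fin m, v i * z ^ (i : ℕ)) ^ 2 with hf
  have hquad : (∫ z in Set.Icc (0:ℝ) 1, f z) = 0 := by
    rw [hf]
    rw [integral_sq_eq, hv]
    simp
  have hcont : Continuous f := by
    rw [hf]
    exact (continuous_finset_sum _ fun i _ => continuous_const.mul (continuous_pow _)).pow 2
  have hint : IntegrableOn f (Set.Icc (0:ℝ) 1) := hcont.integrableOn_Icc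
  have hae : f =ᵐ[volume.restrict (Set.Icc (0:ℝ) 1)] 0 :=
    (integral_eq_zero_iff_of_nonneg (fun z => sq_nonneg _) hint).mp hquad
  have hae2 : ∀ᵐ z ∂(volume : Measure ℝ), z ∈ Set.Icc (0:ℝ) 1 → f z = 0 :=
    (ae_restrict_iff' measurableSet_Icc).mp hae
  have hq0 : q = 0 := by
    by_contra hqne
    have hfin : Set.Finite {x : ℝ | q.IsRoot x} := finite_setOf_isRoot hqne
    have hzero : volume {z : ℝ | z ∈ Set.Icc (0:ℝ) 1 ∧ f z ≠ 0} = 0 := by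
      have h3 := ae_iff.mp hae2
      have hset : {z : ℝ | ¬ (z ∈ Set.Icc (0:ℝ) 1 → f z = 0)}
          = {z : ℝ | z ∈ Set.Icc (0:ℝ) 1 ∧ f z ≠ 0} := by
        ext z; simp only [Set.mem_setOf_eq]; tauto
      rwa [hset] at h3
    have hsub : Set.Icc (0:ℝ) 1
        ⊆ {x : ℝ | q.IsRoot x} ∪ {z : ℝ | z ∈ Set.Icc (0:ℝ) 1 ∧ f z ≠ 0} := by
      intro x hx
      by_cases hfx : f x = 0
      · left
        have hroot : (∑ i : Fin m, v i * x ^ (i : ℕ)) = 0 :=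
          pow_eq_zero_iff two_ne_zero |>.mp hfx
        have : q.eval x = ∑ i : Fin m, v i * x ^ (i : ℕ) := by
          rw [hq, eval_finset_sum]
          simp
        simpa [IsRoot, this] using hroot
      · right; exact ⟨hx, hfx⟩
    have hle := measure_mono (μ := (volume : Measure ℝ)) hsub
    have hle2 : volume (Set.Icc (0:ℝ) 1) ≤ 0 := by
      refine le_trans hle (le_trans (measure_union_le _ _) ?_)
      rw [hfin.measure_zero, hzero]
      simp
    simp [Real.volume_Icc] at hle2
  refine hv0 (funext fun i => ?_)
  rw [← coeff_poly_of_vec m v i, ← hq, hq0]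
  simp

/-- At the boundary points `x = 1` and `x = 0`, the squared `L²([0,1])`-norm of the
minimal moment function `w_m^x` equals `m²` exactly; equivalently the sum of all
entries of `H_m⁻¹` equals `m²` and the `(1,1)` entry of `H_m⁻¹` equals `m²`. -/
theorem minimal_moment_function_boundary_norm
    (m : ℕ) (hm : 1 ≤ m)
    (α1 α0 : Fin m → ℝ)
    (hα1 : (hilbertMatrix m).mulVec α1 = fun i => (1 : ℝ) ^ (i.1))
    (hα0 : (hilbertMatrix m).mulVec α0 = fun i => (0 : ℝ) ^ (i.1)) :
    (∫ z in Set.Icc (0 : ℝ) 1, (∑ i : Fin m, α1 i * z ^ (i.1)) ^ 2) = (m : ℝ) ^ 2 ∧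
    (∫ z in Set.Icc (0 : ℝ) 1, (∑ i : Fin m, α0 i * z ^ (i.1)) ^ 2) = (m : ℝ) ^ 2 ∧
    (∑ i : Fin m, ∑ j : Fin m, (hilbertMatrix m)⁻¹ i j) = (m : ℝ) ^ 2 ∧
    (hilbertMatrix m)⁻¹ ⟨0, hm⟩ ⟨0, hm⟩ = (m : ℝ) ^ 2 := by
  obtain ⟨n, rfl⟩ : ∃ n, m = n + 1 := ⟨m - 1, by omega⟩
  have hdeg1 : (w1p n).natDegree < n + 1 := Nat.lt_succ_of_le (w1p_natDegree n)
  have hdeg0 : (w0p n).natDegree < n + 1 := Nat.lt_succ_of_le (w0p_natDegree n)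
  have hHβ1 : ∀ i : Fin (n+1),
      (hilbertMatrix (n+1)).mulVec (fun k : Fin (n+1) => (w1p n).coeff k) i = 1 := by
    intro i
    rw [mulVec_coeff (n+1) (w1p n) hdeg1 i, w1p_moment n i (Fin.is_le i)]
  have hHβ0 : ∀ i : Fin (n+1),
      (hilbertMatrix (n+1)).mulVec (fun k : Fin (n+1) => (w0p n).coeff k) i
        = (0:ℝ) ^ (i : ℕ) := by
    intro i
    rw [mulVec_coeff (n+1) (w0p n) hdeg0 i, w0p_moment n i (Fin.is_le i), zero_pow_eq]
  have hsumβ1 : ∑ k : Fin (n+1), (w1p n).coeff k = ((n:ℝ)+1)^2 := by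
    have he := eval_eq_sum_range' hdeg1 (1:ℝ)
    simp only [one_pow, mul_one] at he
    rw [← Fin.sum_univ_eq_sum_range (fun k => (w1p n).coeff k) (n+1)] at he
    rw [← he, w1p_eval_one]
  have key1 : ∑ i : Fin (n+1), α1 i = ((n:ℝ)+1)^2 := by
    have h1 : ∑ i : Fin (n+1), α1 i
        = ∑ i : Fin (n+1), α1 i *
            (hilbertMatrix (n+1)).mulVec (fun k : Fin (n+1) => (w1p n).coeff k) i := by
      refine Finset.sum_congr rfl fun i _ => ?_
      rw [hHβ1 i, mul_one]
    rw [h1, dot_swap]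
    simp only [hα1, one_pow, mul_one]
    exact hsumβ1
  have key0 : α0 ⟨0, hm⟩ = ((n:ℝ)+1)^2 := by
    have h1 : α0 ⟨0, hm⟩
        = ∑ i : Fin (n+1), α0 i *
            (hilbertMatrix (n+1)).mulVec (fun k : Fin (n+1) => (w0p n).coeff k) i := by
      rw [← sum_mul_zero_pow (n+1) hm α0]
      exact Finset.sum_congr rfl fun i _ => by rw [hHβ0 i]
    rw [h1, dot_swap]
    simp only [hα0]
    rw [sum_mul_zero_pow (n+1) hm (fun k : Fin (n+1) => (w0p n).coeff k)]
    simpa using w0p_coeff_zero n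
  have hcast : (((n+1 : ℕ)) : ℝ)^2 = ((n:ℝ)+1)^2 := by push_cast; ring
  have hdet := hilbert_det_ne_zero (n+1)
  have hinv : (hilbertMatrix (n+1))⁻¹ * (hilbertMatrix (n+1)) = 1 :=
    Matrix.nonsing_inv_mul _ (isUnit_iff_ne_zero.mpr hdet)
  refine ⟨?_, ?_, ?_, ?_⟩
  · rw [integral_sq_eq]
    simp only [hα1, one_pow, mul_one]
    rw [key1, hcast]
  · rw [integral_sq_eq]
    simp only [hα0]
    rw [sum_mul_zero_pow (n+1) hm α0, key0, hcast]
  · have hrec : (hilbertMatrix (n+1))⁻¹.mulVec ((hilbertMatrix (n+1)).mulVec α1) = α1 := by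
      rw [Matrix.mulVec_mulVec, hinv, Matrix.one_mulVec]
    have hrow : ∀ i : Fin (n+1), ∑ j : Fin (n+1), (hilbertMatrix (n+1))⁻¹ i j = α1 i := by
      intro i
      calc ∑ j : Fin (n+1), (hilbertMatrix (n+1))⁻¹ i j
          = ∑ j : Fin (n+1), (hilbertMatrix (n+1))⁻¹ i j * (1:ℝ) ^ (j:ℕ) := by simp
        _ = ((hilbertMatrix (n+1))⁻¹.mulVec (fun j : Fin (n+1) => (1:ℝ) ^ (j:ℕ))) i := by
            simp [Matrix.mulVec, dotProduct]
        _ = ((hilbertMatrix (n+1))⁻¹.mulVec ((hilbertMatrix (n+1)).mulVec α1)) i := by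
            rw [hα1]
        _ = α1 i := by rw [hrec]
    rw [Finset.sum_congr rfl (fun i _ => hrow i), key1, hcast]
  · have hrec : (hilbertMatrix (n+1))⁻¹.mulVec ((hilbertMatrix (n+1)).mulVec α0) = α0 := by
      rw [Matrix.mulVec_mulVec, hinv, Matrix.one_mulVec]
    calc (hilbertMatrix (n+1))⁻¹ ⟨0, hm⟩ ⟨0, hm⟩
        = ∑ j : Fin (n+1), (hilbertMatrix (n+1))⁻¹ ⟨0, hm⟩ j * (0:ℝ) ^ (j:ℕ) := by
          rw [sum_mul_zero_pow (n+1) hm (fun j => (hilbertMatrix (n+1))⁻¹ ⟨0, hm⟩ j)]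
      _ = ((hilbertMatrix (n+1))⁻¹.mulVec (fun j : Fin (n+1) => (0:ℝ) ^ (j:ℕ))) ⟨0, hm⟩ := by
          simp [Matrix.mulVec, dotProduct]
      _ = ((hilbertMatrix (n+1))⁻¹.mulVec ((hilbertMatrix (n+1)).mulVec α0)) ⟨0, hm⟩ := by
          rw [hα0]
      _ = α0 ⟨0, hm⟩ := by rw [hrec]
      _ = ((n+1 : ℕ) : ℝ)^2 := by rw [key0, hcast]
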